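/- An R-module F is flat if and only if the character module F^+ = Hom_R(F, J) is injective, where J is an injective cogenerator of R-Mod (Lambek's theorem, in the internal-hom formulation). -/

import Mathlib

open TensorProduct LinearMap

section Defs
variable (R : Type) [CommRing R]

/-- `f, g` form a short exact sequence `0 → A → B → C → 0`. -/
def ShortExactSeq {A B C : Type} [AddCommGroup A] [AddCommGroup B] [AddCommGroup C]
    [Module R A] [Module R B] [Module R C] (f : A →ₗ[R] B) (g : B →ₗ[R] C) : Prop :=
  Function.Injective f ∧ Function.Exact f g ∧ Function.Surjective g

/-- The short exact sequence stays exact after tensoring with any module: purity. -/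
def IsPureSeq {A B C : Type} [AddCommGroup A] [AddCommGroup B] [AddCommGroup C]
    [Module R A] [Module R B] [Module R C] (f : A →ₗ[R] B) (g : B →ₗ[R] C) : Prop :=
  ∀ (M : Type) [AddCommGroup M] [Module R M],
    ShortExactSeq R (f.lTensor M) (g.lTensor M)

/-- Pure injectivity: maps into `E` extend along pure monomorphisms. -/
def IsPureInjective (E : Type) [AddCommGroup E] [Module R E] : Prop :=
  ∀ (A B C : Type) [AddCommGroup A] [AddCommGroup B] [AddCommGroup C]
    [Module R A] [Module R B] [Module R C] (f : A →ₗ[R] B) (g : B →ₗ[R] C),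
    ShortExactSeq R f g → IsPureSeq R f g →
    ∀ h : A →ₗ[R] E, ∃ h' : B →ₗ[R] E, h'.comp f = h

/-- `J` is an injective cogenerator: it is injective and `Hom(-, J)` is faithful. -/
def IsInjectiveCogenerator (J : Type) [AddCommGroup J] [Module R J] : Prop :=
  Module.Injective R J ∧
  ∀ (M : Type) [AddCommGroup M] [Module R M], (∀ φ : M →ₗ[R] J, φ = 0) → Subsingleton M

/-- The canonical evaluation map `λ_F : F → Hom(Hom(F, J), J)`, `x ↦ (φ ↦ φ x)`. -/
noncomputable def lamMap (J : Type) [AddCommGroup J] [Module R J]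
    (F : Type) [AddCommGroup F] [Module R F] : F →ₗ[R] ((F →ₗ[R] J) →ₗ[R] J) :=
  LinearMap.applyₗ

end Defs




section Aux
variable {R : Type} [CommRing R] {J : Type} [AddCommGroup J] [Module R J]

/-- For an injective cogenerator `J`, surjectivity of `Hom(-, J)` on a map detects
injectivity of the map. -/
lemma dualJ_surj_iff_inj
    (hJ : Module.Injective R J ∧
      ∀ (M : Type) [AddCommGroup M] [Module R M], (∀ φ : M →ₗ[R] J, φ = 0) → Subsingleton M)
    {A B : Type} [AddCommGroup A] [AddCommGroup B] [Module R A] [Module R B]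
    (f : A →ₗ[R] B) :
    Function.Surjective (f.lcomp R J) ↔ Function.Injective f := by
  constructor
  · intro hs
    rw [← LinearMap.ker_eq_bot]
    rw [Submodule.eq_bot_iff]
    have : Subsingleton (LinearMap.ker f) := by
      apply hJ.2
      intro φ
      obtain ⟨φ', hφ'⟩ := hJ.1.out (LinearMap.ker f).subtype
        (Submodule.injective_subtype _) φ
      obtain ⟨ψ, hψ⟩ := hs φ'
      ext x
      have h0 : f x.1 = 0 := x.2
      have := hφ' x
      simp only [Submodule.subtype_apply] at this
      rw [← this]
      have : φ' x.1 = ψ (f x.1) := by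
        rw [← hψ]; rfl
      rw [this, h0, map_zero]
      rfl
    intro x hx
    have := Subsingleton.elim (⟨x, hx⟩ : LinearMap.ker f) ⟨0, by simp⟩
    exact congrArg Subtype.val this
  · intro hi φ
    obtain ⟨ψ, hψ⟩ := hJ.1.out f hi φ
    exact ⟨ψ, by ext x; exact hψ x⟩

/-- Naturality of currying. -/
lemma lcomp_conj {A B F : Type} [AddCommGroup A] [AddCommGroup B] [AddCommGroup F]
    [Module R A] [Module R B] [Module R F] (f : A →ₗ[R] B) :
    (lift.equiv (RingHom.id R) A F J).toLinearMap ∘ₗ f.lcomp R (F →ₗ[R] J)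
      = ((f.rTensor F).lcomp R J) ∘ₗ (lift.equiv (RingHom.id R) B F J).toLinearMap := by
  ext g a x
  simp [lift.equiv]

lemma rTensor_inj_iff_lcomp_surj
    (hJ : Module.Injective R J ∧
      ∀ (M : Type) [AddCommGroup M] [Module R M], (∀ φ : M →ₗ[R] J, φ = 0) → Subsingleton M)
    {A B F : Type} [AddCommGroup A] [AddCommGroup B] [AddCommGroup F]
    [Module R A] [Module R B] [Module R F] (f : A →ₗ[R] B) :
    Function.Injective (f.rTensor F) ↔ Function.Surjective (f.lcomp R (F →ₗ[R] J)) := by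
  rw [← dualJ_surj_iff_inj hJ]
  constructor
  · intro h g
    obtain ⟨ψ, hψ⟩ := h (lift.equiv (RingHom.id R) A F J g)
    refine ⟨(lift.equiv (RingHom.id R) B F J).symm ψ, ?_⟩
    apply (lift.equiv (RingHom.id R) A F J).injective
    have := LinearMap.congr_fun (lcomp_conj (J := J) f) ((lift.equiv (RingHom.id R) B F J).symm ψ)
    simp only [LinearMap.comp_apply, LinearEquiv.coe_coe] at this
    rw [this, LinearEquiv.apply_symm_apply]
    exact hψ
  · intro h ψ
    obtain ⟨g, hg⟩ := h ((lift.equiv (RingHom.id R) A F J).symm ψ)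
    refine ⟨lift.equiv (RingHom.id R) B F J g, ?_⟩
    have := LinearMap.congr_fun (lcomp_conj (J := J) f) g
    simp only [LinearMap.comp_apply, LinearEquiv.coe_coe] at this
    rw [← this, hg, LinearEquiv.apply_symm_apply]

end Aux

/-- Lambek: `F` is flat iff `F⁺ = Hom_R(F, J)` is injective,
for `J` an injective cogenerator. -/
theorem stmt2 (R : Type) [CommRing R] (J : Type) [AddCommGroup J] [Module R J]
    (hJ : IsInjectiveCogenerator R J)
    (F : Type) [AddCommGroup F] [Module R F] :
    Module.Flat R F ↔ Module.Injective R (F →ₗ[R] J) := by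
  rw [Module.Flat.iff_rTensor_injective', ← Module.Baer.iff_injective]
  have key : ∀ I : Ideal R,
      Function.Injective (LinearMap.rTensor F I.subtype)
        ↔ Function.Surjective (I.subtype.lcomp R (F →ₗ[R] J)) :=
    fun I => rTensor_inj_iff_lcomp_surj hJ I.subtype
  constructor
  · intro h I g
    obtain ⟨g', hg'⟩ := (key I).mp (h I) g
    exact ⟨g', fun x mem => by rw [← hg']; rfl⟩
  · intro h I
    refine (key I).mpr fun g => ?_
    obtain ⟨g', hg'⟩ := h I g
    exact ⟨g', LinearMap.ext fun x => hg' x.1 x.2⟩
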